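/- With A₁,…,A_k, B₁,…,B_k, C simultaneously diagonalizable forming a commuting set, the linear matrix equation ∑_j A_j X B_j = C is consistent if and only if the standard equation (∑_j A_j B_j) X = C is consistent. -/

import Mathlib

open Matrix

/-- A matrix is diagonalizable. -/
def Diagonalizable {n : ℕ} (M : Matrix (Fin n) (Fin n) ℂ) : Prop :=
  ∃ (S : Matrix (Fin n) (Fin n) ℂ) (d : Fin n → ℂ),
    IsUnit S.det ∧ S⁻¹ * M * S = Matrix.diagonal d

namespace Stmt5Aux

variable {n : ℕ}

lemma conj_pow (S G : Matrix (Fin n) (Fin n) ℂ) (hS : IsUnit S.det) (k : ℕ) :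
    (S * G * S⁻¹) ^ k = S * G ^ k * S⁻¹ := by
  have h1 : S * S⁻¹ = 1 := Matrix.mul_nonsing_inv S hS
  have h2 : S⁻¹ * S = 1 := Matrix.nonsing_inv_mul S hS
  induction k with
  | zero => simpa using h1.symm
  | succ k ih =>
      rw [pow_succ, pow_succ, ih]
      simp only [Matrix.mul_assoc]
      rw [Matrix.nonsing_inv_mul_cancel_left _ _ hS]

lemma diag_expr {F S : Matrix (Fin n) (Fin n) ℂ} {d : Fin n → ℂ}
    (hS : IsUnit S.det) (h : S⁻¹ * F * S = Matrix.diagonal d) :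
    F = S * Matrix.diagonal d * S⁻¹ := by
  have h1 : S * S⁻¹ = 1 := Matrix.mul_nonsing_inv S hS
  have h2 : S⁻¹ * S = 1 := Matrix.nonsing_inv_mul S hS
  calc F = (S * S⁻¹) * F * (S * S⁻¹) := by rw [h1]; simp
    _ = S * (S⁻¹ * F * S) * S⁻¹ := by simp only [Matrix.mul_assoc]
    _ = S * Matrix.diagonal d * S⁻¹ := by rw [h]

lemma end_pow_apply (F : Matrix (Fin n) (Fin n) ℂ) (μ : ℂ) (k : ℕ) (v : Fin n → ℂ) :
    ((F.mulVecLin - μ • 1) ^ k) v = ((F - μ • (1 : Matrix (Fin n) (Fin n) ℂ)) ^ k) *ᵥ v := by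
  have hE : ∀ (M : Matrix (Fin n) (Fin n) ℂ),
      (Matrix.toLinAlgEquiv' M : (Fin n → ℂ) →ₗ[ℂ] (Fin n → ℂ)) = M.mulVecLin := fun _ => rfl
  have key2 : ((F - μ • (1 : Matrix (Fin n) (Fin n) ℂ)) ^ k).mulVecLin
      = (F.mulVecLin - μ • 1) ^ k := by
    rw [← hE, map_pow, map_sub, _root_.map_smul, _root_.map_one, hE]
  rw [← key2, Matrix.mulVecLin_apply]

lemma maxGen_le_eigen (F : Matrix (Fin n) (Fin n) ℂ) (hd : Diagonalizable F) (μ : ℂ) :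
    Module.End.maxGenEigenspace F.mulVecLin μ ≤ Module.End.eigenspace F.mulVecLin μ := by
  obtain ⟨S, d, hS, hdiag⟩ := hd
  have h1 : S * S⁻¹ = 1 := Matrix.mul_nonsing_inv S hS
  have h2 : S⁻¹ * S = 1 := Matrix.nonsing_inv_mul S hS
  have hF : F = S * Matrix.diagonal d * S⁻¹ := diag_expr hS hdiag
  have hsub : F - μ • (1 : Matrix (Fin n) (Fin n) ℂ)
      = S * Matrix.diagonal (fun r => d r - μ) * S⁻¹ := by
    have hone : μ • (1 : Matrix (Fin n) (Fin n) ℂ)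
        = S * Matrix.diagonal (fun _ => μ) * S⁻¹ := by
      rw [← Matrix.smul_one_eq_diagonal, Matrix.mul_smul, Matrix.mul_one, Matrix.smul_mul, h1]
    rw [hF, hone, ← Matrix.sub_mul, ← Matrix.mul_sub, Matrix.diagonal_sub]
  intro v hv
  rw [Module.End.mem_maxGenEigenspace] at hv
  obtain ⟨k, hk⟩ := hv
  rw [end_pow_apply, hsub, conj_pow _ _ hS, Matrix.diagonal_pow] at hk
  set w : Fin n → ℂ := S⁻¹ *ᵥ v with hw
  have hdw : Matrix.diagonal ((fun r => d r - μ) ^ k) *ᵥ w = 0 := by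
    have := congrArg (fun x => S⁻¹ *ᵥ x) hk
    simpa [Matrix.mulVec_mulVec, ← Matrix.mul_assoc, h2, hw] using this
  have hdw1 : Matrix.diagonal (fun r => d r - μ) *ᵥ w = 0 := by
    funext r
    have hr : ((fun r => d r - μ) ^ k) r * w r = 0 := by
      have := congrFun hdw r
      simpa [Matrix.mulVec_diagonal] using this
    simp only [Pi.pow_apply] at hr
    rcases eq_or_ne (d r - μ) 0 with h | h
    · simp [Matrix.mulVec_diagonal, h]
    · have : w r = 0 := by
        rcases mul_eq_zero.mp hr with h' | h'
        · exact absurd h' (pow_ne_zero _ h)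
        · exact h'
      simp [Matrix.mulVec_diagonal, this]
  rw [Module.End.mem_eigenspace_iff]
  have hv' : (F - μ • (1 : Matrix (Fin n) (Fin n) ℂ)) *ᵥ v = 0 := by
    rw [hsub, ← Matrix.mulVec_mulVec, ← Matrix.mulVec_mulVec, hdw1, Matrix.mulVec_zero]
  rw [Matrix.sub_mulVec, sub_eq_zero] at hv'
  rw [Matrix.mulVecLin_apply, hv']
  rw [Matrix.smul_mulVec, Matrix.one_mulVec]

lemma iSup_maxGen_top (F : Matrix (Fin n) (Fin n) ℂ) (hd : Diagonalizable F) :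
    ⨆ μ, Module.End.maxGenEigenspace F.mulVecLin μ = ⊤ := by
  obtain ⟨S, d, hS, hdiag⟩ := hd
  have h1 : S * S⁻¹ = 1 := Matrix.mul_nonsing_inv S hS
  have h2 : S⁻¹ * S = 1 := Matrix.nonsing_inv_mul S hS
  have hFS : F * S = S * Matrix.diagonal d := by
    have hF : F = S * Matrix.diagonal d * S⁻¹ := diag_expr hS hdiag
    rw [hF, Matrix.mul_assoc, h2, Matrix.mul_one]
  rw [eq_top_iff]
  intro v _
  have hv : v = ∑ s, (S⁻¹ *ᵥ v) s • (fun r => S r s) := by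
    funext r
    have : (S * S⁻¹) *ᵥ v = v := by rw [h1, Matrix.one_mulVec]
    rw [← Matrix.mulVec_mulVec] at this
    conv_lhs => rw [← this]
    simp [Matrix.mulVec, dotProduct, Finset.sum_apply, mul_comm]
  rw [hv]
  apply Submodule.sum_mem
  intro s _
  refine Submodule.mem_iSup_of_mem (d s) (Submodule.smul_mem _ _ ?_)
  rw [Module.End.mem_maxGenEigenspace]
  refine ⟨1, ?_⟩
  have hcol : F.mulVecLin (fun r => S r s) = d s • (fun r => S r s) := by
    funext r
    have : (F * S) r s = (S * Matrix.diagonal d) r s := by rw [hFS]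
    rw [Matrix.mul_apply, Matrix.mul_diagonal] at this
    simpa [Matrix.mulVecLin_apply, Matrix.mulVec, dotProduct, mul_comm] using this
  simp [pow_one, LinearMap.sub_apply, hcol]

lemma simul {ι : Type} (F : ι → Matrix (Fin n) (Fin n) ℂ)
    (hd : ∀ i, Diagonalizable (F i))
    (hc : ∀ i j, F i * F j = F j * F i) :
    ∃ (S : Matrix (Fin n) (Fin n) ℂ) (d : ι → Fin n → ℂ),
      IsUnit S.det ∧ ∀ i, S⁻¹ * F i * S = Matrix.diagonal (d i) := by
  classical
  set f : ι → Module.End ℂ (Fin n → ℂ) := fun i => (F i).mulVecLin with hf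
  have hcomm : ∀ i j, Commute (f i) (f j) := by
    intro i j
    show f i * f j = f j * f i
    simp only [hf]
    rw [Module.End.mul_eq_comp, Module.End.mul_eq_comp, ← Matrix.mulVecLin_mul,
      ← Matrix.mulVecLin_mul, hc]
  have htop : ⨆ χ : ι → ℂ, ⨅ i, Module.End.maxGenEigenspace (f i) (χ i) = ⊤ :=
    Module.End.iSup_iInf_maxGenEigenspace_eq_top_of_iSup_maxGenEigenspace_eq_top_of_commute f
      (fun i j _ => hcomm i j) (fun i => iSup_maxGen_top _ (hd i))
  have hind : iSupIndep fun χ : ι → ℂ => ⨅ i, Module.End.maxGenEigenspace (f i) (χ i) :=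
    Module.End.independent_iInf_maxGenEigenspace_of_forall_mapsTo f
      (fun i j φ => Module.End.mapsTo_maxGenEigenspace_of_comm (hcomm j i) φ)
  have hint : DirectSum.IsInternal
      (fun χ : ι → ℂ => ⨅ i, Module.End.maxGenEigenspace (f i) (χ i)) :=
    (DirectSum.isInternal_submodule_iff_iSupIndep_and_iSup_eq_top _).mpr ⟨hind, htop⟩
  let bW := fun χ : ι → ℂ =>
    Module.Basis.ofVectorSpace ℂ (↥(⨅ i, Module.End.maxGenEigenspace (f i) (χ i)))
  let b := hint.collectedBasis bW
  haveI : Fintype ((χ : ι → ℂ) × Module.Basis.ofVectorSpaceIndex ℂ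
      (↥(⨅ i, Module.End.maxGenEigenspace (f i) (χ i)))) :=
    FiniteDimensional.fintypeBasisIndex b
  let e := b.indexEquiv (Pi.basisFun ℂ (Fin n))
  let b' := b.reindex e
  let S : Matrix (Fin n) (Fin n) ℂ := (Pi.basisFun ℂ (Fin n)).toMatrix ⇑b'
  haveI : Invertible S := (Pi.basisFun ℂ (Fin n)).invertibleToMatrix b'
  have hS : IsUnit S.det := Matrix.isUnit_det_of_invertible S
  set d : ι → Fin n → ℂ := fun i s => (e.symm s).1 i with hdd
  have hSentry : ∀ r s, S r s = b' s r := by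
    intro r s
    simp [S, Module.Basis.toMatrix_apply, Pi.basisFun_repr]
  have hvec : ∀ i s, f i (b' s) = d i s • b' s := by
    intro i s
    have hb : (b' s : Fin n → ℂ) = b (e.symm s) := by simp [b', Module.Basis.reindex_apply]
    have hmem : (b' s : Fin n → ℂ)
        ∈ ⨅ i', Module.End.maxGenEigenspace (f i') ((e.symm s).1 i') := by
      rw [hb]
      exact hint.collectedBasis_mem bW (e.symm s)
    have hm := (Submodule.mem_iInf _).mp hmem i
    exact Module.End.mem_eigenspace_iff.mp (maxGen_le_eigen (F i) (hd i) _ hm)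
  refine ⟨S, d, hS, ?_⟩
  have hFS : ∀ i, F i * S = S * Matrix.diagonal (d i) := by
    intro i
    ext r s
    rw [Matrix.mul_apply, Matrix.mul_diagonal]
    have h := congrFun (hvec i s) r
    simp only [Matrix.mulVecLin_apply, Pi.smul_apply, smul_eq_mul, hf] at h
    calc ∑ t, F i r t * S t s = (F i *ᵥ (b' s)) r := by
          simp [Matrix.mulVec, dotProduct, hSentry]
      _ = d i s * b' s r := h
      _ = S r s * d i s := by rw [hSentry, mul_comm]
  intro i
  rw [Matrix.mul_assoc, hFS i, Matrix.nonsing_inv_mul_cancel_left _ _ hS]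

lemma diag_congr (f g : Fin n → ℂ) (h : ∀ r, f r = g r) :
    Matrix.diagonal f = Matrix.diagonal g :=
  congrArg Matrix.diagonal (funext h)

lemma diag_of_sum {k : ℕ} (g : Fin k → Fin n → ℂ) :
    ∑ j, Matrix.diagonal (g j) = Matrix.diagonal (fun r => ∑ j, g j r) := by
  ext r s
  simp only [Matrix.sum_apply, Matrix.diagonal_apply]
  by_cases h : r = s <;> simp [h]

lemma diag_sum_eq {k : ℕ} (a b : Fin k → Fin n → ℂ) (y : Fin n → ℂ) :
    ∑ j, Matrix.diagonal (a j) * Matrix.diagonal y * Matrix.diagonal (b j)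
      = Matrix.diagonal (fun r => (∑ j, a j r * b j r) * y r) := by
  have h1 : ∀ j : Fin k, Matrix.diagonal (a j) * Matrix.diagonal y * Matrix.diagonal (b j)
      = Matrix.diagonal (fun r => a j r * y r * b j r) := by
    intro j
    rw [Matrix.diagonal_mul_diagonal, Matrix.diagonal_mul_diagonal]
  rw [Finset.sum_congr rfl (fun j _ => h1 j), diag_of_sum]
  refine diag_congr _ _ fun r => ?_
  rw [Finset.sum_mul]
  exact Finset.sum_congr rfl fun j _ => by ring

lemma diagM {k : ℕ} (a b : Fin k → Fin n → ℂ) :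
    ∑ j, Matrix.diagonal (a j) * Matrix.diagonal (b j)
      = Matrix.diagonal (fun r => ∑ j, a j r * b j r) := by
  have h1 : ∀ j : Fin k, Matrix.diagonal (a j) * Matrix.diagonal (b j)
      = Matrix.diagonal (fun r => a j r * b j r) := by
    intro j; rw [Matrix.diagonal_mul_diagonal]
  rw [Finset.sum_congr rfl (fun j _ => h1 j), diag_of_sum]

lemma diag_iff {k : ℕ} (a b : Fin k → Fin n → ℂ) (c : Fin n → ℂ) :
    (∃ Y : Matrix (Fin n) (Fin n) ℂ,
        ∑ j, Matrix.diagonal (a j) * Y * Matrix.diagonal (b j) = Matrix.diagonal c) ↔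
      (∃ Y : Matrix (Fin n) (Fin n) ℂ,
        (∑ j, Matrix.diagonal (a j) * Matrix.diagonal (b j)) * Y = Matrix.diagonal c) := by
  set M : Fin n → ℂ := fun r => ∑ j, a j r * b j r with hM
  constructor
  · rintro ⟨Y, hY⟩
    have hr : ∀ r, M r * Y r r = c r := by
      intro r
      have h := congrFun (congrFun hY r) r
      simp only [Matrix.sum_apply, Matrix.diagonal_apply_eq] at h
      have h2 : ∀ j : Fin k, (Matrix.diagonal (a j) * Y * Matrix.diagonal (b j)) r r
          = a j r * Y r r * b j r := by
        intro j
        rw [Matrix.mul_diagonal, Matrix.diagonal_mul]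
      rw [Finset.sum_congr rfl (fun j _ => h2 j)] at h
      rw [hM, Finset.sum_mul, ← h]
      exact Finset.sum_congr rfl fun j _ => by ring
    refine ⟨Matrix.diagonal (fun r => Y r r), ?_⟩
    rw [diagM, Matrix.diagonal_mul_diagonal]
    exact diag_congr _ _ hr
  · rintro ⟨Y, hY⟩
    rw [diagM] at hY
    have hr : ∀ r, M r * Y r r = c r := by
      intro r
      have h := congrFun (congrFun hY r) r
      simpa [Matrix.diagonal_mul] using h
    refine ⟨Matrix.diagonal (fun r => Y r r), ?_⟩
    rw [diag_sum_eq]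
    exact diag_congr _ _ hr

lemma exists_sum_conj {k : ℕ} (S : Matrix (Fin n) (Fin n) ℂ) (hS : IsUnit S.det)
    (P Q : Fin k → Matrix (Fin n) (Fin n) ℂ) (R : Matrix (Fin n) (Fin n) ℂ) :
    (∃ X : Matrix (Fin n) (Fin n) ℂ, ∑ j, P j * X * Q j = R) ↔
      (∃ Y : Matrix (Fin n) (Fin n) ℂ,
        ∑ j, (S⁻¹ * P j * S) * Y * (S⁻¹ * Q j * S) = S⁻¹ * R * S) := by
  have h1 : S * S⁻¹ = 1 := Matrix.mul_nonsing_inv S hS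
  have h2 : S⁻¹ * S = 1 := Matrix.nonsing_inv_mul S hS
  have hc1 : ∀ X : Matrix (Fin n) (Fin n) ℂ, S * (S⁻¹ * X) = X :=
    fun X => Matrix.mul_nonsing_inv_cancel_left (A := S) X hS
  have hc2 : ∀ X : Matrix (Fin n) (Fin n) ℂ, S⁻¹ * (S * X) = X :=
    fun X => Matrix.nonsing_inv_mul_cancel_left (A := S) X hS
  constructor
  · rintro ⟨X, hX⟩
    refine ⟨S⁻¹ * X * S, ?_⟩
    have he : ∀ j : Fin k, (S⁻¹ * P j * S) * (S⁻¹ * X * S) * (S⁻¹ * Q j * S)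
        = S⁻¹ * (P j * X * Q j) * S := by
      intro j
      simp only [Matrix.mul_assoc, hc1, hc2, h1, h2, Matrix.mul_one, Matrix.one_mul]
    rw [Finset.sum_congr rfl (fun j _ => he j), ← Finset.sum_mul, ← Finset.mul_sum, hX]
  · rintro ⟨Y, hY⟩
    refine ⟨S * Y * S⁻¹, ?_⟩
    have he : ∀ j : Fin k, P j * (S * Y * S⁻¹) * Q j
        = S * ((S⁻¹ * P j * S) * Y * (S⁻¹ * Q j * S)) * S⁻¹ := by
      intro j
      simp only [Matrix.mul_assoc, hc1, hc2, h1, h2, Matrix.mul_one, Matrix.one_mul]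
    rw [Finset.sum_congr rfl (fun j _ => he j), ← Finset.sum_mul, ← Finset.mul_sum, hY]
    simp only [Matrix.mul_assoc, hc1, hc2, h1, h2, Matrix.mul_one, Matrix.one_mul]

lemma exists_mul_conj (S : Matrix (Fin n) (Fin n) ℂ) (hS : IsUnit S.det)
    (T R : Matrix (Fin n) (Fin n) ℂ) :
    (∃ X : Matrix (Fin n) (Fin n) ℂ, T * X = R) ↔
      (∃ Y : Matrix (Fin n) (Fin n) ℂ, (S⁻¹ * T * S) * Y = S⁻¹ * R * S) := by
  have h1 : S * S⁻¹ = 1 := Matrix.mul_nonsing_inv S hS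
  have h2 : S⁻¹ * S = 1 := Matrix.nonsing_inv_mul S hS
  have hc1 : ∀ X : Matrix (Fin n) (Fin n) ℂ, S * (S⁻¹ * X) = X :=
    fun X => Matrix.mul_nonsing_inv_cancel_left (A := S) X hS
  have hc2 : ∀ X : Matrix (Fin n) (Fin n) ℂ, S⁻¹ * (S * X) = X :=
    fun X => Matrix.nonsing_inv_mul_cancel_left (A := S) X hS
  constructor
  · rintro ⟨X, hX⟩
    refine ⟨S⁻¹ * X * S, ?_⟩
    calc (S⁻¹ * T * S) * (S⁻¹ * X * S) = S⁻¹ * (T * X) * S := by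
          simp only [Matrix.mul_assoc, hc1, hc2, h1, h2, Matrix.mul_one, Matrix.one_mul]
      _ = S⁻¹ * R * S := by rw [hX]
  · rintro ⟨Y, hY⟩
    refine ⟨S * Y * S⁻¹, ?_⟩
    calc T * (S * Y * S⁻¹) = S * ((S⁻¹ * T * S) * Y) * S⁻¹ := by
          simp only [Matrix.mul_assoc, hc1, hc2, h1, h2, Matrix.mul_one, Matrix.one_mul]
      _ = S * (S⁻¹ * R * S) * S⁻¹ := by rw [hY]
      _ = R := by simp only [Matrix.mul_assoc, hc1, hc2, h1, h2, Matrix.mul_one, Matrix.one_mul]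

end Stmt5Aux

theorem stmt5 {n k : ℕ} (A B : Fin k → Matrix (Fin n) (Fin n) ℂ)
    (C : Matrix (Fin n) (Fin n) ℂ)
    (hdA : ∀ j, Diagonalizable (A j)) (hdB : ∀ j, Diagonalizable (B j))
    (hdC : Diagonalizable C)
    (hAA : ∀ j l, A j * A l = A l * A j)
    (hBB : ∀ j l, B j * B l = B l * B j)
    (hAB : ∀ j l, A j * B l = B l * A j)
    (hAC : ∀ j, A j * C = C * A j)
    (hBC : ∀ j, B j * C = C * B j) :
    (∃ X : Matrix (Fin n) (Fin n) ℂ, ∑ j, A j * X * B j = C) ↔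
      (∃ X : Matrix (Fin n) (Fin n) ℂ, (∑ j, A j * B j) * X = C) := by
  classical
  set F : (Fin k ⊕ Fin k) ⊕ Unit → Matrix (Fin n) (Fin n) ℂ :=
    Sum.elim (Sum.elim A B) (fun _ => C) with hF
  have hd : ∀ i, Diagonalizable (F i) := by
    rintro ((j | j) | ⟨⟩)
    · exact hdA j
    · exact hdB j
    · exact hdC
  have hc : ∀ i j, F i * F j = F j * F i := by
    rintro ((i | i) | ⟨⟩) ((j | j) | ⟨⟩)
    · exact hAA i j
    · exact hAB i j
    · exact hAC i
    · exact (hAB j i).symm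
    · exact hBB i j
    · exact hBC i
    · exact (hAC j).symm
    · exact (hBC j).symm
    · rfl
  obtain ⟨S, d, hS, hdiag⟩ := Stmt5Aux.simul F hd hc
  have h1 : S * S⁻¹ = 1 := Matrix.mul_nonsing_inv S hS
  have h2 : S⁻¹ * S = 1 := Matrix.nonsing_inv_mul S hS
  have hc1 : ∀ X : Matrix (Fin n) (Fin n) ℂ, S * (S⁻¹ * X) = X :=
    fun X => Matrix.mul_nonsing_inv_cancel_left (A := S) X hS
  have hc2 : ∀ X : Matrix (Fin n) (Fin n) ℂ, S⁻¹ * (S * X) = X :=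
    fun X => Matrix.nonsing_inv_mul_cancel_left (A := S) X hS
  set a : Fin k → Fin n → ℂ := fun j => d (Sum.inl (Sum.inl j)) with ha
  set b : Fin k → Fin n → ℂ := fun j => d (Sum.inl (Sum.inr j)) with hb
  set c : Fin n → ℂ := d (Sum.inr ()) with hcc
  have hdA' : ∀ j, S⁻¹ * A j * S = Matrix.diagonal (a j) :=
    fun j => hdiag (Sum.inl (Sum.inl j))
  have hdB' : ∀ j, S⁻¹ * B j * S = Matrix.diagonal (b j) :=
    fun j => hdiag (Sum.inl (Sum.inr j))
  have hdC' : S⁻¹ * C * S = Matrix.diagonal c := hdiag (Sum.inr ())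
  have hT : S⁻¹ * (∑ j, A j * B j) * S
      = ∑ j, Matrix.diagonal (a j) * Matrix.diagonal (b j) := by
    rw [Finset.mul_sum, Finset.sum_mul]
    refine Finset.sum_congr rfl fun j _ => ?_
    calc S⁻¹ * (A j * B j) * S = (S⁻¹ * A j * S) * (S⁻¹ * B j * S) := by
          simp only [Matrix.mul_assoc, hc1, hc2, h1, h2, Matrix.mul_one, Matrix.one_mul]
      _ = Matrix.diagonal (a j) * Matrix.diagonal (b j) := by rw [hdA' j, hdB' j]
  rw [Stmt5Aux.exists_sum_conj S hS A B C, Stmt5Aux.exists_mul_conj S hS (∑ j, A j * B j) C]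
  simp only [hdA', hdB', hdC', hT]
  exact Stmt5Aux.diag_iff a b c
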